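/- There exists an integer k₀ such that for all integers k ≥ k₀ there exists a finite simple graph G which is K_{k,k}-free, has average degree d(G) ≥ k^{k/21}, and in which every induced subgraph G' that is C_4-free has average degree d(G') < k. (In other words, for sufficiently large k, f_Ind(k,k) ≥ k^{k/21}, where f_Ind(s,k) is the least D such that every K_{s,s}-free graph of average degree at least D contains an induced C_4-free subgraph of average degree at least k.) -/

import Mathlib

open SimpleGraph

/-- The average degree of a graph: `2 e(G) / |V(G)|`. -/
noncomputable def avgDeg {V : Type*} (G : SimpleGraph V) : ℝ :=
  2 * (G.edgeSet.ncard : ℝ) / (Nat.card V : ℝ)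

/-- The maximum degree of a graph on a finite vertex type. -/
noncomputable def maxDeg {V : Type*} [Fintype V] (G : SimpleGraph V) : ℕ :=
  Finset.univ.sup fun v => (G.neighborSet v).ncard

/-- `G` contains no (not necessarily induced) copy of the complete bipartite graph `K_{s,s}`. -/
def KssFree {V : Type*} (G : SimpleGraph V) (s : ℕ) : Prop :=
  ¬ ∃ S T : Finset V, Disjoint S T ∧ S.card = s ∧ T.card = s ∧
      ∀ a ∈ S, ∀ b ∈ T, G.Adj a b

/-- `G` contains no (not necessarily induced) copy of the four-cycle `C₄`:
no two distinct vertices have two distinct common neighbours. -/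
def C4Free {V : Type*} (G : SimpleGraph V) : Prop :=
  ¬ ∃ a b c d : V, a ≠ b ∧ c ≠ d ∧ G.Adj a c ∧ G.Adj b c ∧ G.Adj a d ∧ G.Adj b d

/-- `G` contains no triangle. -/
def C3Free {V : Type*} (G : SimpleGraph V) : Prop :=
  ¬ ∃ a b c : V, G.Adj a b ∧ G.Adj b c ∧ G.Adj a c

/-- `G` is bipartite: the vertex set can be split into two independent sets. -/
def IsBipartite {V : Type*} (G : SimpleGraph V) : Prop :=
  ∃ f : V → Bool, ∀ ⦃a b : V⦄, G.Adj a b → f a ≠ f b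

/-- `G` is `d`-degenerate: every nonempty (induced) subgraph has a vertex of degree at most `d`. -/
def IsDegenerate {V : Type*} (G : SimpleGraph V) (d : ℝ) : Prop :=
  ∀ S : Finset V, S.Nonempty → ∃ v ∈ S, ((G.neighborSet v ∩ ↑S).ncard : ℝ) ≤ d

/-- The number of edges of `G` with one endpoint in `A` and one in `B`. -/
noncomputable def eBetween {V : Type*} (G : SimpleGraph V) (A B : Set V) : ℕ :=
  {e : Sym2 V | e ∈ G.edgeSet ∧ ∃ a ∈ A, ∃ b ∈ B, e = s(a, b)}.ncard
open Finset

section Counting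
variable {ι : Type*} [Fintype ι] [DecidableEq ι] {q : ℕ}

/-- Overwrite `f` on `b` by `h`. -/
def patch (b : Finset ι) (h : {x // x ∈ b} → Fin q) (f : ι → Fin q) : ι → Fin q :=
  fun c => if hc : c ∈ b then h ⟨c, hc⟩ else f c

/-- Restriction of `f` to `b`. -/
def restr (b : Finset ι) (f : ι → Fin q) : {x // x ∈ b} → Fin q := fun c => f c.1

lemma card_fun_eq : Nat.card (ι → Fin q) = q ^ Fintype.card ι := by
  rw [Nat.card_eq_fintype_card, Fintype.card_fun, Fintype.card_fin]

lemma card_fun_coe_eq (b : Finset ι) :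
    Nat.card ({x // x ∈ b} → Fin q) = q ^ b.card := by
  rw [Nat.card_eq_fintype_card, Fintype.card_fun, Fintype.card_fin, Fintype.card_coe]

lemma master (b : Finset ι) (P : (ι → Fin q) → Prop)
    (hP : ∀ f g : ι → Fin q, (∀ c ∉ b, f c = g c) → P f → P g)
    (p : ({x // x ∈ b} → Fin q) → Prop) :
    Nat.card {f : ι → Fin q // P f ∧ p (restr b f)} * q ^ b.card
      = Nat.card {f : ι → Fin q // P f} * Nat.card {g : {x // x ∈ b} → Fin q // p g} := by
  have hagree : ∀ (h : {x // x ∈ b} → Fin q) (f : ι → Fin q), ∀ c ∉ b, f c = patch b h f c := by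
    intro h f c hc
    simp [patch, hc]
  have hrp : ∀ (h : {x // x ∈ b} → Fin q) (f : ι → Fin q), restr b (patch b h f) = h := by
    intro h f
    funext c
    simp [restr, patch, c.2]
  have E : ({f : ι → Fin q // P f ∧ p (restr b f)} × ({x // x ∈ b} → Fin q))
      ≃ ({f : ι → Fin q // P f} × {g : {x // x ∈ b} → Fin q // p g}) := by
    refine ⟨fun fh => (⟨patch b fh.2 fh.1.1, hP _ _ (hagree _ _) fh.1.2.1⟩,
        ⟨restr b fh.1.1, fh.1.2.2⟩),
      fun fg => (⟨patch b fg.2.1 fg.1.1,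
        hP _ _ (hagree _ _) fg.1.2, by rw [hrp]; exact fg.2.2⟩, restr b fg.1.1),
      ?_, ?_⟩
    · rintro ⟨⟨f, hf⟩, h⟩
      refine Prod.ext (Subtype.ext ?_) ?_
      · funext c
        by_cases hc : c ∈ b
        · simp [patch, restr, hc]
        · simp [patch, hc]
      · exact hrp h f
    · rintro ⟨⟨f, hf⟩, ⟨g, hg⟩⟩
      refine Prod.ext (Subtype.ext ?_) (Subtype.ext ?_)
      · funext c
        by_cases hc : c ∈ b
        · simp [patch, restr, hc]
        · simp [patch, hc]
      · exact hrp g f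
  calc Nat.card {f : ι → Fin q // P f ∧ p (restr b f)} * q ^ b.card
      = Nat.card ({f : ι → Fin q // P f ∧ p (restr b f)} × ({x // x ∈ b} → Fin q)) := by
        rw [Nat.card_prod, card_fun_coe_eq]
    _ = Nat.card ({f : ι → Fin q // P f} × {g : {x // x ∈ b} → Fin q // p g}) :=
        Nat.card_congr E
    _ = _ := Nat.card_prod _ _

lemma card_zero_fun [NeZero q] (b : Finset ι) :
    Nat.card {g : {x // x ∈ b} → Fin q // ∀ c, g c = 0} = 1 := by
  haveI : Unique {g : {x // x ∈ b} → Fin q // ∀ c, g c = 0} :=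
    ⟨⟨⟨fun _ => 0, fun _ => rfl⟩⟩, by
      rintro ⟨g, hg⟩
      exact Subtype.ext (funext fun c => hg c)⟩
  exact Nat.card_unique

lemma count_all_zero [NeZero q] (J : Finset ι) :
    Nat.card {f : ι → Fin q // ∀ c ∈ J, f c = 0} * q ^ J.card = q ^ Fintype.card ι := by
  have h := master (q := q) J (fun _ => True) (fun _ _ _ _ => trivial)
    (fun g => ∀ c, g c = 0)
  rw [Nat.card_congr (Equiv.subtypeEquivRight (q := fun f : ι → Fin q => ∀ c ∈ J, f c = 0)
    (by intro f; simp [restr, Subtype.forall]))] at h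
  rw [h, Nat.card_congr (Equiv.subtypeUnivEquiv (fun _ => trivial)), card_fun_eq,
    card_zero_fun, mul_one]

lemma card_not_all_zero [NeZero q] (b : Finset ι) :
    Nat.card {g : {x // x ∈ b} → Fin q // ∃ c, g c ≠ 0} = q ^ b.card - 1 := by
  classical
  rw [Nat.card_congr (Equiv.subtypeEquivRight
    (q := fun g : {x // x ∈ b} → Fin q => ¬ ∀ c, g c = 0)
    (by intro g; push_neg; rfl))]
  rw [Nat.card_eq_fintype_card, Fintype.card_subtype_compl]
  rw [← Nat.card_eq_fintype_card (α := {g : {x // x ∈ b} → Fin q // ∀ c, g c = 0}),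
    card_zero_fun, Fintype.card_fun, Fintype.card_fin, Fintype.card_coe]

lemma count_blocks [NeZero q] {β : Type*} [DecidableEq β] (B : β → Finset ι) :
    ∀ F : Finset β, (∀ t ∈ F, ∀ t' ∈ F, t ≠ t' → Disjoint (B t) (B t')) →
      (∀ t ∈ F, (B t).card = 4) →
      Nat.card {f : ι → Fin q // ∀ t ∈ F, ∃ c ∈ B t, f c ≠ 0} * (q ^ 4) ^ F.card
        = (q ^ 4 - 1) ^ F.card * q ^ Fintype.card ι := by
  intro F
  induction F using Finset.induction_on with
  | empty =>
    intro _ _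
    simp only [notMem_empty, false_implies, implies_true, card_empty, pow_zero, mul_one,
      one_mul]
    rw [Nat.card_congr (Equiv.subtypeUnivEquiv (fun _ => trivial)), card_fun_eq]
  | @insert a F ha ih =>
    intro hd hc
    have hdF : ∀ t ∈ F, ∀ t' ∈ F, t ≠ t' → Disjoint (B t) (B t') :=
      fun t ht t' ht' h => hd t (mem_insert_of_mem ht) t' (mem_insert_of_mem ht') h
    have hcF : ∀ t ∈ F, (B t).card = 4 := fun t ht => hc t (mem_insert_of_mem ht)
    have key := master (q := q) (B a)
      (fun f => ∀ t ∈ F, ∃ c ∈ B t, f c ≠ 0)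
      (by
        intro f g hfg hPf t ht
        obtain ⟨c, hcBt, hfc⟩ := hPf t ht
        refine ⟨c, hcBt, ?_⟩
        have hta : t ≠ a := fun h => ha (h ▸ ht)
        have hdis : Disjoint (B t) (B a) :=
          hd t (mem_insert_of_mem ht) a (mem_insert_self a F) hta
        rw [← hfg c (disjoint_left.mp hdis hcBt)]
        exact hfc)
      (fun g => ∃ c, g c ≠ 0)
    rw [Nat.card_congr (Equiv.subtypeEquivRight
      (q := fun f : ι → Fin q => ∀ t ∈ insert a F, ∃ c ∈ B t, f c ≠ 0)
      (by
        intro f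
        simp only [forall_mem_insert]
        constructor
        · rintro ⟨h1, ⟨c, hc0⟩⟩
          exact ⟨⟨c.1, c.2, hc0⟩, h1⟩
        · rintro ⟨⟨c, hcB, hc0⟩, h1⟩
          exact ⟨h1, ⟨⟨c, hcB⟩, hc0⟩⟩))] at key
    rw [card_not_all_zero, hc a (mem_insert_self a F)] at key
    have ihe := ih hdF hcF
    rw [card_insert_of_notMem ha]
    calc Nat.card {f : ι → Fin q // ∀ t ∈ insert a F, ∃ c ∈ B t, f c ≠ 0}
          * (q ^ 4) ^ (F.card + 1)
        = (Nat.card {f : ι → Fin q // ∀ t ∈ insert a F, ∃ c ∈ B t, f c ≠ 0}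
          * q ^ 4) * (q ^ 4) ^ F.card := by ring
      _ = (Nat.card {f : ι → Fin q // ∀ t ∈ F, ∃ c ∈ B t, f c ≠ 0}
          * (q ^ 4 - 1)) * (q ^ 4) ^ F.card := by rw [key]
      _ = (q ^ 4 - 1) * (Nat.card {f : ι → Fin q // ∀ t ∈ F, ∃ c ∈ B t, f c ≠ 0}
          * (q ^ 4) ^ F.card) := by ring
      _ = (q ^ 4 - 1) * ((q ^ 4 - 1) ^ F.card * q ^ Fintype.card ι) := by rw [ihe]
      _ = (q ^ 4 - 1) ^ (F.card + 1) * q ^ Fintype.card ι := by ring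

end Counting
section Graph
variable {n q : ℕ} [NeZero q]

/-- The random graph determined by an edge-labelling `f`. -/
def Gf (f : Sym2 (Fin n) → Fin q) : SimpleGraph (Fin n) where
  Adj u v := u ≠ v ∧ f s(u, v) = 0
  symm := by
    refine ⟨?_⟩
    rintro u v ⟨h1, h2⟩
    exact ⟨h1.symm, by rwa [Sym2.eq_swap]⟩
  loopless := by refine ⟨?_⟩; rintro u ⟨h1, _⟩; exact h1 rfl

lemma Gf_adj (f : Sym2 (Fin n) → Fin q) (u v : Fin n) :
    (Gf f).Adj u v ↔ u ≠ v ∧ f s(u, v) = 0 := Iff.rfl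

open scoped Classical in
/-- The number of edges of `Gf f`. -/
noncomputable def Ecount (f : Sym2 (Fin n) → Fin q) : ℕ :=
  ((univ : Finset (Sym2 (Fin n))).filter fun c => ¬ c.IsDiag ∧ f c = 0).card

open scoped Classical in
noncomputable def Nd (n : ℕ) : ℕ :=
  ((univ : Finset (Sym2 (Fin n))).filter fun c => ¬ c.IsDiag).card

open scoped Classical in
lemma edgeSet_Gf (f : Sym2 (Fin n) → Fin q) :
    (Gf f).edgeSet = ↑((univ : Finset (Sym2 (Fin n))).filter fun c => ¬ c.IsDiag ∧ f c = 0) := by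
  ext e
  induction e with
  | _ u v =>
    simp only [mem_edgeSet, coe_filter, Set.mem_setOf_eq, mem_univ, true_and,
      Sym2.mk_isDiag_iff]
    exact Iff.rfl

open scoped Classical in
lemma ncard_edgeSet_Gf (f : Sym2 (Fin n) → Fin q) :
    (Gf f).edgeSet.ncard = Ecount f := by
  rw [edgeSet_Gf, Set.ncard_coe_finset, Ecount]

open scoped Classical in
lemma Ecount_le (f : Sym2 (Fin n) → Fin q) : Ecount f ≤ Nd n := by
  refine Finset.card_le_card ?_
  intro c hc
  simp only [mem_filter] at hc ⊢
  exact ⟨hc.1, hc.2.1⟩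

lemma Nd_val : Nd n = n.choose 2 := by
  classical
  rw [Nd, ← Fintype.card_subtype, Sym2.card_subtype_not_diag, Fintype.card_fin]

open scoped Classical in
lemma sum_Ecount :
    (∑ f : Sym2 (Fin n) → Fin q, Ecount f) * q
      = Nd n * q ^ Fintype.card (Sym2 (Fin n)) := by
  have hEc : ∀ f : Sym2 (Fin n) → Fin q,
      Ecount f = ∑ c ∈ ((univ : Finset (Sym2 (Fin n))).filter fun c => ¬ c.IsDiag),
        (if f c = 0 then 1 else 0) := by
    intro f
    rw [Ecount, ← Finset.card_filter, Finset.filter_filter]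
  have hswap : (∑ f : Sym2 (Fin n) → Fin q, Ecount f)
      = ∑ c ∈ ((univ : Finset (Sym2 (Fin n))).filter fun c => ¬ c.IsDiag),
          ∑ f : Sym2 (Fin n) → Fin q, (if f c = 0 then 1 else 0) := by
    rw [← Finset.sum_comm]
    exact Finset.sum_congr rfl fun f _ => hEc f
  have hcoord : ∀ c : Sym2 (Fin n),
      (∑ f : Sym2 (Fin n) → Fin q, (if f c = 0 then (1:ℕ) else 0)) * q
        = q ^ Fintype.card (Sym2 (Fin n)) := by
    intro c
    have h1 : (∑ f : Sym2 (Fin n) → Fin q, (if f c = 0 then (1:ℕ) else 0))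
        = (univ.filter fun f : Sym2 (Fin n) → Fin q => f c = 0).card := by
      rw [Finset.card_filter]
    have h2 : (univ.filter fun f : Sym2 (Fin n) → Fin q => f c = 0).card
        = Nat.card {f : Sym2 (Fin n) → Fin q // ∀ c' ∈ ({c} : Finset (Sym2 (Fin n))), f c' = 0} := by
      rw [Nat.card_eq_fintype_card, Fintype.card_subtype]
      congr 1
      apply Finset.filter_congr
      intro f _
      simp
    have h3 := count_all_zero (q := q) ({c} : Finset (Sym2 (Fin n)))
    rw [Finset.card_singleton, pow_one] at h3
    rw [h1, h2, h3]
  rw [hswap, Finset.sum_mul]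
  rw [Finset.sum_congr rfl fun c _ => hcoord c]
  rw [Finset.sum_const, smul_eq_mul, Nd]

end Graph
section KST

/-- Kővári–Sós–Turán for `C₄`: a `C₄`-free graph on at most `k² - k - 1` vertices
has average degree less than `k`. -/
lemma c4free_avgDeg_lt {W : Type*} [Fintype W] (H : SimpleGraph W) (hC4 : C4Free H)
    (k : ℕ) (hk : 2 ≤ k) (hcard : Fintype.card W ≤ k ^ 2 - k - 1) :
    avgDeg H < k := by
  classical
  set M := Fintype.card W with hM
  rcases Nat.eq_zero_or_pos M with hM0 | hMpos
  · have : (Nat.card W : ℝ) = 0 := by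
      rw [Nat.card_eq_fintype_card, ← hM, hM0, Nat.cast_zero]
    rw [avgDeg, this, div_zero]
    positivity
  -- double counting of cherries
  haveI : DecidableRel H.Adj := fun a b => Classical.dec _
  set P : Finset (W × W × W) :=
    univ.filter (fun t => t.2.1 ≠ t.2.2 ∧ H.Adj t.1 t.2.1 ∧ H.Adj t.1 t.2.2) with hP
  have hfiber : ∀ v : W, (P.filter (fun t => t.1 = v)).card
      = (H.neighborFinset v).offDiag.card := by
    intro v
    refine Finset.card_nbij' (fun t => t.2) (fun ab => (v, ab)) ?_ ?_ ?_ ?_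
    · intro t ht
      simp only [Finset.mem_coe, hP, Finset.mem_filter, Finset.mem_univ, true_and] at ht
      obtain ⟨⟨hne, h1, h2⟩, hv⟩ := ht
      rw [Finset.mem_coe, Finset.mem_offDiag]
      subst hv
      exact ⟨by rwa [SimpleGraph.mem_neighborFinset], by rwa [SimpleGraph.mem_neighborFinset], hne⟩
    · intro ab hab
      rw [Finset.mem_coe, Finset.mem_offDiag] at hab
      simp only [Finset.mem_coe, hP, Finset.mem_filter, Finset.mem_univ, true_and]
      exact ⟨⟨hab.2.2, (SimpleGraph.mem_neighborFinset _ _ _).mp hab.1,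
        (SimpleGraph.mem_neighborFinset _ _ _).mp hab.2.1⟩, trivial⟩
    · intro t ht
      simp only [Finset.mem_coe, hP, Finset.mem_filter] at ht
      obtain ⟨-, hv⟩ := ht
      rw [← hv]
    · intro ab _
      rfl
  have hPcard : P.card = ∑ v : W, (H.neighborFinset v).offDiag.card := by
    rw [Finset.card_eq_sum_card_fiberwise (f := fun t : W × W × W => t.1)
      (t := (univ : Finset W)) (fun t _ => Finset.mem_univ _)]
    exact Finset.sum_congr rfl fun v _ => hfiber v
  -- injection into ordered pairs of distinct vertices
  have hinj : P.card ≤ (univ : Finset W).offDiag.card := by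
    refine Finset.card_le_card_of_injOn (fun t => t.2) ?_ ?_
    · intro t ht
      simp only [Finset.mem_coe, hP, Finset.mem_filter, Finset.mem_univ, true_and] at ht
      rw [Finset.mem_coe, Finset.mem_offDiag]
      exact ⟨Finset.mem_univ _, Finset.mem_univ _, ht.1⟩
    · intro t ht t' ht' h2
      simp only [Finset.mem_coe, hP, Finset.mem_filter, Finset.mem_univ, true_and] at ht ht'
      dsimp only at h2
      by_cases hv : t.1 = t'.1
      · exact Prod.ext hv h2
      · exfalso
        apply hC4
        refine ⟨t.2.1, t.2.2, t.1, t'.1, ht.1, hv, (ht.2.1).symm, (ht.2.2).symm, ?_, ?_⟩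
        · rw [← h2] at ht'
          exact (ht'.2.1).symm
        · rw [← h2] at ht'
          exact (ht'.2.2).symm
  -- put the counts together
  have hdeg : ∀ v : W, (H.neighborFinset v).offDiag.card
      = H.degree v * H.degree v - H.degree v := by
    intro v
    rw [Finset.offDiag_card, SimpleGraph.degree]
  have hkey : ∑ v : W, (H.degree v * H.degree v - H.degree v) ≤ M * M - M := by
    calc ∑ v : W, (H.degree v * H.degree v - H.degree v)
        = P.card := by
          rw [hPcard]
          exact Finset.sum_congr rfl fun v _ => (hdeg v).symm
      _ ≤ (univ : Finset W).offDiag.card := hinj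
      _ = M * M - M := by rw [Finset.offDiag_card, Finset.card_univ]
  -- real arithmetic
  have hself : ∀ d : ℕ, d ≤ d * d := fun d => match d with
    | 0 => le_refl 0
    | (d + 1) => Nat.le_mul_of_pos_left _ (Nat.succ_pos d)
  have hcast : ∑ v : W, ((H.degree v : ℝ) ^ 2 - H.degree v) ≤ (M : ℝ) * M - M := by
    have := hkey
    have hcast1 : ((∑ v : W, (H.degree v * H.degree v - H.degree v) : ℕ) : ℝ)
        = ∑ v : W, ((H.degree v : ℝ) ^ 2 - H.degree v) := by
      push_cast [Nat.cast_sub (hself _)]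
      exact Finset.sum_congr rfl fun v _ => by ring
    have hcast2 : ((M * M - M : ℕ) : ℝ) = (M : ℝ) * M - M := by
      rw [Nat.cast_sub (hself _)]
      push_cast
      ring
    calc ∑ v : W, ((H.degree v : ℝ) ^ 2 - H.degree v)
        = ((∑ v : W, (H.degree v * H.degree v - H.degree v) : ℕ) : ℝ) := hcast1.symm
      _ ≤ ((M * M - M : ℕ) : ℝ) := by exact_mod_cast hkey
      _ = (M : ℝ) * M - M := hcast2
  set D : ℝ := ∑ v : W, (H.degree v : ℝ) with hD
  have hCS : D ^ 2 ≤ (M : ℝ) * ∑ v : W, (H.degree v : ℝ) ^ 2 := by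
    have := Finset.sum_mul_sq_le_sq_mul_sq (univ : Finset W)
      (fun v => (H.degree v : ℝ)) (fun _ => 1)
    simp only [mul_one, one_pow] at this
    calc D ^ 2 = (∑ v : W, (H.degree v : ℝ)) ^ 2 := by rw [hD]
      _ ≤ (∑ v : W, (H.degree v : ℝ) ^ 2) * (∑ _v : W, (1:ℝ)) := this
      _ = (M : ℝ) * ∑ v : W, (H.degree v : ℝ) ^ 2 := by
          rw [Finset.sum_const, Finset.card_univ, nsmul_eq_mul, mul_one, mul_comm, hM]
  -- handshake
  have hncard : H.edgeSet.ncard = H.edgeFinset.card := by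
    rw [SimpleGraph.edgeFinset]
    exact Set.ncard_eq_toFinset_card' _
  have hhand : D = 2 * ((H.edgeSet.ncard : ℝ)) := by
    rw [hncard, hD]
    rw [← Nat.cast_ofNat, ← Nat.cast_mul, ← SimpleGraph.sum_degrees_eq_twice_card_edges]
    push_cast
    rfl
  have havg : avgDeg H = D / M := by
    rw [avgDeg, ← hhand, Nat.card_eq_fintype_card, hM]
  -- final arithmetic
  rw [havg]
  by_contra hcon
  push_neg at hcon
  have hM1 : (1 : ℝ) ≤ (M : ℝ) := by exact_mod_cast hMpos
  have hMpos' : (0:ℝ) < (M:ℝ) := by linarith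
  have hk2 : (2:ℝ) ≤ (k:ℝ) := by exact_mod_cast hk
  have hDk : (k : ℝ) * M ≤ D := by
    rw [le_div_iff₀ hMpos'] at hcon
    linarith
  have hsum2 : ∑ v : W, (H.degree v : ℝ)^2 ≤ (M:ℝ)*M - M + D := by
    rw [Finset.sum_sub_distrib] at hcast
    rw [hD]
    linarith
  have hD2 : D^2 ≤ (M:ℝ)*((M:ℝ)*M - M + D) :=
    le_trans hCS (mul_le_mul_of_nonneg_left hsum2 (by positivity))
  have hMk : (M:ℝ) ≤ (k:ℝ)^2 - k - 1 := by
    have h1k : k ≤ k^2 := Nat.le_self_pow two_ne_zero k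
    have hkk : k^2 = k*k := by ring
    have h2kk : 2*k ≤ k*k := Nat.mul_le_mul hk (le_refl k)
    have h2k : 1 ≤ k^2 - k := by omega
    have hcast3 : ((k^2 - k - 1 : ℕ) : ℝ) = (k:ℝ)^2 - k - 1 := by
      have e1 : ((k^2 - k : ℕ) : ℝ) = (k:ℝ)^2 - k := by
        rw [Nat.cast_sub h1k]; push_cast; ring
      rw [Nat.cast_sub h2k, e1]; push_cast; ring
    calc (M:ℝ) ≤ ((k^2 - k - 1 : ℕ) : ℝ) := by exact_mod_cast hcard
      _ = (k:ℝ)^2 - k - 1 := hcast3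
  have hb : (0:ℝ) ≤ (k:ℝ)*M - M := by nlinarith
  have hD0 : (0:ℝ) ≤ D := by nlinarith
  have h1 : D*(D - M) ≤ (M:ℝ)*M*((M:ℝ)-1) := by nlinarith [hD2]
  have h2 : (k:ℝ)*M*((k:ℝ)*M - M) ≤ D*(D - M) := mul_le_mul hDk (by linarith) hb hD0
  have heq : (k:ℝ)*M*((k:ℝ)*M - M) = ((M:ℝ)*M)*((k:ℝ)^2 - k) := by ring
  have h3 : ((M:ℝ)*M)*((k:ℝ)^2 - k) ≤ ((M:ℝ)*M)*((M:ℝ)-1) := by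
    rw [← heq]
    calc (k:ℝ)*M*((k:ℝ)*M - M) ≤ D*(D-M) := h2
      _ ≤ (M:ℝ)*M*((M:ℝ)-1) := h1
  have h4 : (k:ℝ)^2 - k ≤ (M:ℝ) - 1 :=
    (mul_le_mul_iff_right₀ (by positivity : (0:ℝ) < (M:ℝ)*M)).mp h3
  linarith

end KST
section BadEvents

/-- The finset of elements satisfying `p`, with a fixed classical decidability instance. -/
noncomputable def evFinset {α : Type*} [Fintype α] (p : α → Prop) : Finset α :=
  @Finset.filter _ p (Classical.decPred p) Finset.univ

lemma mem_evFinset {α : Type*} [Fintype α] {p : α → Prop} {x : α} :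
    x ∈ evFinset p ↔ p x := by
  classical
  rw [evFinset, Finset.mem_filter]
  exact ⟨fun h => h.2, fun h => ⟨Finset.mem_univ _, h⟩⟩

lemma evFinset_card {α : Type*} [Fintype α] (p : α → Prop) :
    (evFinset p).card = Nat.card {x // p x} := by
  classical
  rw [Nat.card_eq_fintype_card, evFinset]
  exact (Fintype.card_subtype p).symm

lemma evFinset_card_le {α : Type*} [Fintype α] (p : α → Prop) :
    (evFinset p).card ≤ Fintype.card α := by
  classical
  rw [evFinset]
  exact le_trans (Finset.card_filter_le _ _) (le_of_eq (Finset.card_univ))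

lemma bad1_bound (n q k : ℕ) [NeZero q] :
    Nat.card {f : Sym2 (Fin n) → Fin q // ¬ KssFree (Gf f) k} * q ^ (k * k)
      ≤ n ^ (2 * k) * q ^ Fintype.card (Sym2 (Fin n)) := by
  classical
  set D : Finset ((Fin k → Fin n) × (Fin k → Fin n)) :=
    evFinset (fun ab => Function.Injective ab.1 ∧ Function.Injective ab.2 ∧
      ∀ i j, ab.1 i ≠ ab.2 j) with hD
  set E : ((Fin k → Fin n) × (Fin k → Fin n)) → Finset (Sym2 (Fin n) → Fin q) :=
    fun ab => evFinset (fun f => ∀ c ∈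
      Finset.image (fun ij : Fin k × Fin k => s(ab.1 ij.1, ab.2 ij.2)) Finset.univ,
        f c = 0) with hE
  have hsub : evFinset (fun f : Sym2 (Fin n) → Fin q => ¬ KssFree (Gf f) k)
      ⊆ D.biUnion E := by
    intro f hf
    rw [mem_evFinset, KssFree, not_not] at hf
    obtain ⟨S, T, hdisj, hS, hT, hadj⟩ := hf
    set eS := S.equivFinOfCardEq hS with heS
    set eT := T.equivFinOfCardEq hT with heT
    set a : Fin k → Fin n := fun i => (eS.symm i).1 with ha
    set b : Fin k → Fin n := fun j => (eT.symm j).1 with hb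
    have haS : ∀ i, a i ∈ S := fun i => (eS.symm i).2
    have hbT : ∀ j, b j ∈ T := fun j => (eT.symm j).2
    have hainj : Function.Injective a :=
      fun i j h => eS.symm.injective (Subtype.ext h)
    have hbinj : Function.Injective b :=
      fun i j h => eT.symm.injective (Subtype.ext h)
    have hab : ∀ i j, a i ≠ b j := by
      intro i j h
      exact (Finset.disjoint_left.mp hdisj (haS i)) (h ▸ hbT j)
    rw [Finset.mem_biUnion]
    refine ⟨(a, b), ?_, ?_⟩
    · rw [hD, mem_evFinset]
      exact ⟨hainj, hbinj, hab⟩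
    · rw [hE, mem_evFinset]
      intro c hc
      rw [Finset.mem_image] at hc
      obtain ⟨ij, -, rfl⟩ := hc
      exact (hadj _ (haS ij.1) _ (hbT ij.2)).2
  have hEcard : ∀ ab ∈ D, (E ab).card * q ^ (k * k) = q ^ Fintype.card (Sym2 (Fin n)) := by
    intro ab hab
    rw [hD, mem_evFinset] at hab
    obtain ⟨h1, h2, h3⟩ := hab
    set J := Finset.image (fun ij : Fin k × Fin k => s(ab.1 ij.1, ab.2 ij.2)) Finset.univ
      with hJ
    have hJcard : J.card = k * k := by
      rw [hJ, Finset.card_image_of_injective _ ?_, Finset.card_univ]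
      · simp
      intro ij ij' h
      rw [Sym2.eq_iff] at h
      rcases h with ⟨hx, hy⟩ | ⟨hx, hy⟩
      · exact Prod.ext (h1 hx) (h2 hy)
      · exact absurd hx (h3 _ _)
    have hcz := count_all_zero (q := q) J
    rw [hJcard] at hcz
    rw [← hcz]
    congr 1
    rw [hE]
    exact evFinset_card _
  rw [← evFinset_card]
  calc (evFinset fun f : Sym2 (Fin n) → Fin q => ¬ KssFree (Gf f) k).card * q ^ (k*k)
      ≤ (D.biUnion E).card * q ^ (k*k) :=
        Nat.mul_le_mul_right _ (Finset.card_le_card hsub)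
    _ ≤ (∑ ab ∈ D, (E ab).card) * q ^ (k*k) :=
        Nat.mul_le_mul_right _ (Finset.card_biUnion_le)
    _ = ∑ ab ∈ D, (E ab).card * q ^ (k*k) := by rw [Finset.sum_mul]
    _ = ∑ _ab ∈ D, q ^ Fintype.card (Sym2 (Fin n)) := Finset.sum_congr rfl hEcard
    _ = D.card * q ^ Fintype.card (Sym2 (Fin n)) := by rw [Finset.sum_const, smul_eq_mul]
    _ ≤ n ^ (2*k) * q ^ Fintype.card (Sym2 (Fin n)) := by
        refine Nat.mul_le_mul_right _ ?_
        calc D.card ≤ Fintype.card ((Fin k → Fin n) × (Fin k → Fin n)) := evFinset_card_le _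
          _ = n ^ (2*k) := by
              simp [Fintype.card_prod, Fintype.card_fun, ← pow_add, two_mul]

end BadEvents
section Blocks
variable {m n : ℕ}

def vv (g : Fin m → Fin n) (i : Fin (m/2)) : Fin n :=
  g ⟨2 * i.1, by have := i.isLt; omega⟩

def ww (g : Fin m → Fin n) (i : Fin (m/2)) : Fin n :=
  g ⟨2 * i.1 + 1, by have := i.isLt; omega⟩

lemma vv_ne_ww {g : Fin m → Fin n} (hg : Function.Injective g) (i j : Fin (m/2)) :
    vv g i ≠ ww g j := by
  intro h
  have := hg h
  rw [Fin.mk.injEq] at this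
  omega

lemma vv_inj {g : Fin m → Fin n} (hg : Function.Injective g) {i j : Fin (m/2)}
    (h : vv g i = vv g j) : i = j := by
  have := hg h
  rw [Fin.mk.injEq] at this
  exact Fin.ext (by omega)

lemma ww_inj {g : Fin m → Fin n} (hg : Function.Injective g) {i j : Fin (m/2)}
    (h : ww g i = ww g j) : i = j := by
  have := hg h
  rw [Fin.mk.injEq] at this
  exact Fin.ext (by omega)

def pairF (g : Fin m → Fin n) (i : Fin (m/2)) : Finset (Fin n) := {vv g i, ww g i}

lemma mem_pairF {g : Fin m → Fin n} {i : Fin (m/2)} {x : Fin n} :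
    x ∈ pairF g i ↔ x = vv g i ∨ x = ww g i := by
  rw [pairF, Finset.mem_insert, Finset.mem_singleton]

lemma pair_idx {g : Fin m → Fin n} (hg : Function.Injective g) {i j : Fin (m/2)}
    {x : Fin n} (hi : x ∈ pairF g i) (hj : x ∈ pairF g j) : i = j := by
  rw [mem_pairF] at hi hj
  rcases hi with hi | hi <;> rcases hj with hj | hj
  · exact vv_inj hg (hi ▸ hj ▸ rfl : vv g i = vv g j)
  · exact absurd (hi ▸ hj : vv g i = ww g j) (vv_ne_ww hg i j)
  · exact absurd (hj ▸ hi : vv g j = ww g i).symm.symm (vv_ne_ww hg j i)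
  · exact ww_inj hg (hi ▸ hj ▸ rfl : ww g i = ww g j)

lemma pairF_card {g : Fin m → Fin n} (hg : Function.Injective g) (i : Fin (m/2)) :
    (pairF g i).card = 2 := by
  rw [pairF, Finset.card_insert_of_notMem (by
    rw [Finset.mem_singleton]; exact vv_ne_ww hg i i), Finset.card_singleton]

def Bl (g : Fin m → Fin n) (p : Fin (m/2) × Fin (m/2)) : Finset (Sym2 (Fin n)) :=
  (pairF g p.1 ×ˢ pairF g p.2).image (fun xy => s(xy.1, xy.2))

lemma mem_Bl {g : Fin m → Fin n} {p : Fin (m/2) × Fin (m/2)} {e : Sym2 (Fin n)} :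
    e ∈ Bl g p ↔ ∃ x ∈ pairF g p.1, ∃ y ∈ pairF g p.2, e = s(x, y) := by
  rw [Bl, Finset.mem_image]
  constructor
  · rintro ⟨xy, hxy, rfl⟩
    rw [Finset.mem_product] at hxy
    exact ⟨xy.1, hxy.1, xy.2, hxy.2, rfl⟩
  · rintro ⟨x, hx, y, hy, rfl⟩
    exact ⟨(x, y), Finset.mem_product.mpr ⟨hx, hy⟩, rfl⟩

lemma Bl_card {g : Fin m → Fin n} (hg : Function.Injective g)
    {p : Fin (m/2) × Fin (m/2)} (hp : p.1 ≠ p.2) : (Bl g p).card = 4 := by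
  rw [Bl, Finset.card_image_of_injOn, Finset.card_product, pairF_card hg, pairF_card hg]
  intro xy hxy x'y' hx'y' h
  rw [Finset.mem_coe, Finset.mem_product] at hxy hx'y'
  rw [Sym2.eq_iff] at h
  rcases h with ⟨h1, h2⟩ | ⟨h1, h2⟩
  · exact Prod.ext h1 h2
  · exact absurd (pair_idx hg hxy.1 (h1 ▸ hx'y'.2)) hp

def Fpairs (M₂ : ℕ) : Finset (Fin M₂ × Fin M₂) :=
  Finset.univ.filter (fun p => p.1 < p.2)

lemma mem_Fpairs {M₂ : ℕ} {p : Fin M₂ × Fin M₂} : p ∈ Fpairs M₂ ↔ p.1 < p.2 := by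
  rw [Fpairs, Finset.mem_filter]
  exact ⟨fun h => h.2, fun h => ⟨Finset.mem_univ _, h⟩⟩

lemma Bl_disjoint {g : Fin m → Fin n} (hg : Function.Injective g)
    {p p' : Fin (m/2) × Fin (m/2)} (hp : p ∈ Fpairs (m/2)) (hp' : p' ∈ Fpairs (m/2))
    (hne : p ≠ p') : Disjoint (Bl g p) (Bl g p') := by
  rw [mem_Fpairs] at hp hp'
  rw [Finset.disjoint_left]
  intro e he he'
  rw [mem_Bl] at he he'
  obtain ⟨x, hx, y, hy, rfl⟩ := he
  obtain ⟨x', hx', y', hy', heq⟩ := he'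
  rw [Sym2.eq_iff] at heq
  rcases heq with ⟨h1, h2⟩ | ⟨h1, h2⟩
  · exact hne (Prod.ext (pair_idx hg hx (h1 ▸ hx')) (pair_idx hg hy (h2 ▸ hy')))
  · have e1 : p.1 = p'.2 := pair_idx hg hx (h1 ▸ hy')
    have e2 : p.2 = p'.1 := pair_idx hg hy (h2 ▸ hx')
    have l1 : p.1.1 < p.2.1 := hp
    have l2 : p'.1.1 < p'.2.1 := hp'
    have e1' : p.1.1 = p'.2.1 := by rw [e1]
    have e2' : p.2.1 = p'.1.1 := by rw [e2]
    omega

lemma Fpairs_lower (M₂ : ℕ) : (M₂/2) * (M₂/2) ≤ (Fpairs M₂).card := by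
  have h := Finset.card_le_card_of_injOn
    (f := fun ij : Fin (M₂/2) × Fin (M₂/2) =>
      ((⟨ij.1.1, by have := ij.1.isLt; omega⟩ : Fin M₂),
       (⟨M₂/2 + ij.2.1, by have := ij.2.isLt; omega⟩ : Fin M₂)))
    (s := Finset.univ) (t := Fpairs M₂)
    (by
      intro ij _
      rw [Finset.mem_coe, mem_Fpairs]
      have h1 := ij.1.isLt
      have h2 := ij.2.isLt
      exact Fin.mk_lt_mk.mpr (by omega))
    (by
      intro ij _ ij' _ h
      rw [Prod.mk.injEq, Fin.mk.injEq, Fin.mk.injEq] at h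
      exact Prod.ext (Fin.ext h.1) (Fin.ext (by omega)))
  calc (M₂/2) * (M₂/2)
      = (Finset.univ : Finset (Fin (M₂/2) × Fin (M₂/2))).card := by simp
    _ ≤ (Fpairs M₂).card := h

lemma bad2_bound (n q m : ℕ) [NeZero q] :
    Nat.card {f : Sym2 (Fin n) → Fin q // ∃ S : Finset (Fin n), S.card = m ∧
        ¬ ∃ a ∈ S, ∃ b ∈ S, ∃ c ∈ S, ∃ d ∈ S, a ≠ b ∧ c ≠ d ∧
          (Gf f).Adj a c ∧ (Gf f).Adj b c ∧ (Gf f).Adj a d ∧ (Gf f).Adj b d}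
      * (q ^ 4) ^ (Fpairs (m/2)).card
      ≤ n ^ m * ((q ^ 4 - 1) ^ (Fpairs (m/2)).card * q ^ Fintype.card (Sym2 (Fin n))) := by
  classical
  set Eg : (Fin m → Fin n) → Finset (Sym2 (Fin n) → Fin q) :=
    fun g => evFinset (fun f => ∀ p ∈ Fpairs (m/2), ∃ c ∈ Bl g p, f c ≠ 0) with hEg
  set Dg : Finset (Fin m → Fin n) := evFinset (fun g => Function.Injective g) with hDg
  have hsub : evFinset (fun f : Sym2 (Fin n) → Fin q => ∃ S : Finset (Fin n), S.card = m ∧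
      ¬ ∃ a ∈ S, ∃ b ∈ S, ∃ c ∈ S, ∃ d ∈ S, a ≠ b ∧ c ≠ d ∧
        (Gf f).Adj a c ∧ (Gf f).Adj b c ∧ (Gf f).Adj a d ∧ (Gf f).Adj b d)
      ⊆ Dg.biUnion Eg := by
    intro f hf
    rw [mem_evFinset] at hf
    obtain ⟨S, hScard, hno⟩ := hf
    set eS := S.equivFinOfCardEq hScard with heS
    set g : Fin m → Fin n := fun i => (eS.symm i).1 with hgdef
    have hgS : ∀ i, g i ∈ S := fun i => (eS.symm i).2
    have hginj : Function.Injective g :=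
      fun i j h => eS.symm.injective (Subtype.ext h)
    rw [Finset.mem_biUnion]
    refine ⟨g, by rw [hDg, mem_evFinset]; exact hginj, ?_⟩
    rw [hEg, mem_evFinset]
    intro p hp
    by_contra hc
    push_neg at hc
    have hplt := mem_Fpairs.mp hp
    have hp12 : p.1 ≠ p.2 := ne_of_lt hplt
    have key_ne : ∀ x ∈ pairF g p.1, ∀ y ∈ pairF g p.2, x ≠ y := by
      intro x hx y hy hxy
      exact hp12 (pair_idx hginj hx (hxy ▸ hy))
    have hadj : ∀ x ∈ pairF g p.1, ∀ y ∈ pairF g p.2, (Gf f).Adj x y := by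
      intro x hx y hy
      exact ⟨key_ne x hx y hy, hc s(x, y) (mem_Bl.mpr ⟨x, hx, y, hy, rfl⟩)⟩
    have hvS : ∀ i, vv g i ∈ S := fun i => hgS _
    have hwS : ∀ i, ww g i ∈ S := fun i => hgS _
    have m1 : vv g p.1 ∈ pairF g p.1 := mem_pairF.mpr (Or.inl rfl)
    have m2 : ww g p.1 ∈ pairF g p.1 := mem_pairF.mpr (Or.inr rfl)
    have m3 : vv g p.2 ∈ pairF g p.2 := mem_pairF.mpr (Or.inl rfl)
    have m4 : ww g p.2 ∈ pairF g p.2 := mem_pairF.mpr (Or.inr rfl)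
    exact hno ⟨vv g p.1, hvS _, ww g p.1, hwS _, vv g p.2, hvS _, ww g p.2, hwS _,
      vv_ne_ww hginj p.1 p.1, vv_ne_ww hginj p.2 p.2,
      hadj _ m1 _ m3, hadj _ m2 _ m3, hadj _ m1 _ m4, hadj _ m2 _ m4⟩
  have hEcard : ∀ g ∈ Dg, (Eg g).card * (q ^ 4) ^ (Fpairs (m/2)).card
      = (q ^ 4 - 1) ^ (Fpairs (m/2)).card * q ^ Fintype.card (Sym2 (Fin n)) := by
    intro g hgmem
    rw [hDg, mem_evFinset] at hgmem
    have hcb := count_blocks (q := q) (Bl g) (Fpairs (m/2))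
      (fun p hp p' hp' h => Bl_disjoint hgmem hp hp' h)
      (fun p hp => Bl_card hgmem (ne_of_lt (mem_Fpairs.mp hp)))
    rw [← hcb]
    congr 1
    rw [hEg]
    exact evFinset_card _
  rw [← evFinset_card]
  calc (evFinset fun f : Sym2 (Fin n) → Fin q => ∃ S : Finset (Fin n), S.card = m ∧
        ¬ ∃ a ∈ S, ∃ b ∈ S, ∃ c ∈ S, ∃ d ∈ S, a ≠ b ∧ c ≠ d ∧
          (Gf f).Adj a c ∧ (Gf f).Adj b c ∧ (Gf f).Adj a d ∧ (Gf f).Adj b d).card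
        * (q ^ 4) ^ (Fpairs (m/2)).card
      ≤ (Dg.biUnion Eg).card * (q ^ 4) ^ (Fpairs (m/2)).card :=
        Nat.mul_le_mul_right _ (Finset.card_le_card hsub)
    _ ≤ (∑ g ∈ Dg, (Eg g).card) * (q ^ 4) ^ (Fpairs (m/2)).card :=
        Nat.mul_le_mul_right _ (Finset.card_biUnion_le)
    _ = ∑ g ∈ Dg, (Eg g).card * (q ^ 4) ^ (Fpairs (m/2)).card := by rw [Finset.sum_mul]
    _ = ∑ _g ∈ Dg, (q ^ 4 - 1) ^ (Fpairs (m/2)).card * q ^ Fintype.card (Sym2 (Fin n)) :=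
        Finset.sum_congr rfl hEcard
    _ = Dg.card * ((q ^ 4 - 1) ^ (Fpairs (m/2)).card * q ^ Fintype.card (Sym2 (Fin n))) := by
        rw [Finset.sum_const, smul_eq_mul]
    _ ≤ n ^ m * ((q ^ 4 - 1) ^ (Fpairs (m/2)).card * q ^ Fintype.card (Sym2 (Fin n))) := by
        refine Nat.mul_le_mul_right _ ?_
        calc Dg.card ≤ Fintype.card (Fin m → Fin n) := evFinset_card_le _
          _ = n ^ m := by simp [Fintype.card_fun]

end Blocks
section Construction

open scoped Classical

lemma induce_adj' {V : Type*} (G : SimpleGraph V) (s : Set V) (a b : s) :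
    (G.induce s).Adj a b ↔ G.Adj a b := by
  simp [comap_adj]

set_option maxHeartbeats 1000000 in
lemma construction (k q n m : ℕ) (hq2 : 2 ≤ q) (hn2 : 2 ≤ n) (hk2 : 2 ≤ k)
    (hm : m = k^2 - k)
    (F3 : 8*q*n^(2*k) ≤ q^(k*k))
    (F4 : 8*(q:ℝ)*(n:ℝ)^m * (1 - 1/(q:ℝ)^4)^(((m/2)/2)*((m/2)/2)) ≤ 1)
    (F5 : (k:ℝ)^((k:ℝ)/21) ≤ ((n:ℝ)-1)/(2*(q:ℝ))) :
    ∃ (G : SimpleGraph (Fin n)), KssFree G k ∧ (k:ℝ)^((k:ℝ)/21) ≤ avgDeg G ∧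
      ∀ S : Finset (Fin n), C4Free (G.induce (S : Set (Fin n))) →
        avgDeg (G.induce (S : Set (Fin n))) < k := by
  haveI : NeZero q := ⟨by omega⟩
  have hq0 : (0:ℝ) < q := by positivity
  have hq1 : (1:ℝ) < q := by exact_mod_cast hq2
  set cI := Fintype.card (Sym2 (Fin n)) with hcI
  set Qr : ℝ := (q:ℝ)^cI with hQr
  have hQpos : (0:ℝ) < Qr := by rw [hQr]; positivity
  set p1 : (Sym2 (Fin n) → Fin q) → Prop := fun f => ¬ KssFree (Gf f) k with hp1
  set p2 : (Sym2 (Fin n) → Fin q) → Prop := fun f => ∃ S : Finset (Fin n), S.card = m ∧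
      ¬ ∃ a ∈ S, ∃ b ∈ S, ∃ c ∈ S, ∃ d ∈ S, a ≠ b ∧ c ≠ d ∧
        (Gf f).Adj a c ∧ (Gf f).Adj b c ∧ (Gf f).Adj a d ∧ (Gf f).Adj b d with hp2
  set p3 : (Sym2 (Fin n) → Fin q) → Prop := fun f => 2*q*Ecount f < Nd n with hp3
  -- bad event 1
  have hb1 : ((evFinset p1).card : ℝ) ≤ Qr / (8*q) := by
    have h := bad1_bound n q k
    have hc : ((evFinset p1).card : ℝ) * (q:ℝ)^(k*k) ≤ (n:ℝ)^(2*k) * Qr := by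
      rw [hp1, evFinset_card, hQr, hcI]
      exact_mod_cast h
    have hF3 : 8*(q:ℝ) * (n:ℝ)^(2*k) ≤ (q:ℝ)^(k*k) := by exact_mod_cast F3
    rw [le_div_iff₀ (by positivity)]
    have hA := mul_le_mul_of_nonneg_left hc (by positivity : (0:ℝ) ≤ 8*q)
    have hB := mul_le_mul_of_nonneg_right hF3 hQpos.le
    have h2 : (((evFinset p1).card : ℝ) * (8*q)) * (q:ℝ)^(k*k) ≤ Qr * (q:ℝ)^(k*k) := by
      nlinarith [hA, hB]
    exact le_of_mul_le_mul_right h2 (by positivity)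
  -- bad event 2
  have hb2 : ((evFinset p2).card : ℝ) ≤ Qr / (8*q) := by
    have h := bad2_bound n q m
    set Fc := (Fpairs (m/2)).card with hFc
    set x : ℝ := 1 - 1/(q:ℝ)^4 with hx
    have hq4pos : (0:ℝ) < (q:ℝ)^4 := by positivity
    have hx0 : 0 ≤ x := by
      rw [hx]
      have h1 : 1/(q:ℝ)^4 ≤ 1 := by
        rw [div_le_one hq4pos]
        have h14 : (1:ℝ)^4 ≤ (q:ℝ)^4 := pow_le_pow_left₀ (by norm_num) (by linarith) 4
        linarith [h14]
      linarith
    have hx1 : x ≤ 1 := by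
      rw [hx]
      have : (0:ℝ) < 1/(q:ℝ)^4 := by positivity
      linarith
    have hq41 : 1 ≤ q^4 := Nat.one_le_pow _ _ (by omega)
    have hxval : ((q^4 - 1 : ℕ) : ℝ) = x * (q:ℝ)^4 := by
      rw [Nat.cast_sub hq41, hx]
      push_cast
      field_simp
    have hcast : ((evFinset p2).card : ℝ) * ((q:ℝ)^4)^Fc
        ≤ (n:ℝ)^m * (((q^4-1:ℕ):ℝ)^Fc * Qr) := by
      rw [hp2, evFinset_card, hQr, hcI, hFc]
      exact_mod_cast h
    rw [hxval, mul_pow] at hcast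
    have hc2 : ((evFinset p2).card : ℝ) ≤ (n:ℝ)^m * x^Fc * Qr := by
      refine le_of_mul_le_mul_right ?_ (by positivity : (0:ℝ) < ((q:ℝ)^4)^Fc)
      calc ((evFinset p2).card : ℝ) * ((q:ℝ)^4)^Fc
          ≤ (n:ℝ)^m * (x^Fc * ((q:ℝ)^4)^Fc * Qr) := hcast
        _ = ((n:ℝ)^m * x^Fc * Qr) * ((q:ℝ)^4)^Fc := by ring
    have hmono : x^Fc ≤ x^(((m/2)/2)*((m/2)/2)) :=
      pow_le_pow_of_le_one hx0 hx1 (by rw [hFc] at *; exact Fpairs_lower (m/2))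
    have hF4' : (n:ℝ)^m * x^(((m/2)/2)*((m/2)/2)) * (8*(q:ℝ)) ≤ 1 := by
      calc (n:ℝ)^m * x^(((m/2)/2)*((m/2)/2)) * (8*(q:ℝ))
          = 8*(q:ℝ)*(n:ℝ)^m * (1 - 1/(q:ℝ)^4)^(((m/2)/2)*((m/2)/2)) := by rw [← hx]; ring
        _ ≤ 1 := F4
    rw [le_div_iff₀ (by positivity)]
    calc ((evFinset p2).card : ℝ) * (8*q)
        ≤ ((n:ℝ)^m * x^Fc * Qr) * (8*q) :=
          mul_le_mul_of_nonneg_right hc2 (by positivity)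
      _ ≤ ((n:ℝ)^m * x^(((m/2)/2)*((m/2)/2)) * Qr) * (8*q) := by
          have hmm : (n:ℝ)^m * x^Fc ≤ (n:ℝ)^m * x^(((m/2)/2)*((m/2)/2)) :=
            mul_le_mul_of_nonneg_left hmono (by positivity)
          have := mul_le_mul_of_nonneg_right
            (mul_le_mul_of_nonneg_right hmm hQpos.le) (by positivity : (0:ℝ) ≤ 8*q)
          linarith
      _ = ((n:ℝ)^m * x^(((m/2)/2)*((m/2)/2)) * (8*q)) * Qr := by ring
      _ ≤ 1 * Qr := mul_le_mul_of_nonneg_right hF4' hQpos.le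
      _ = Qr := one_mul _
  -- bad event 3 (Markov)
  have hNdpos : 0 < Nd n := by
    rw [Nd_val]
    exact Nat.choose_pos hn2
  have hb3 : ((evFinset p3).card : ℝ) * (2*q-1) ≤ (2*q-2) * Qr := by
    set B : ℝ := ((evFinset p3).card : ℝ) with hB
    set N : ℝ := (Nd n : ℝ) with hN
    have hB0 : 0 ≤ B := by rw [hB]; positivity
    have hN1 : 1 ≤ N := by
      rw [hN]
      exact_mod_cast hNdpos
    have hcardfun : ((Finset.univ : Finset (Sym2 (Fin n) → Fin q)).card : ℝ) = Qr := by
      rw [Finset.card_univ, Fintype.card_fun, Fintype.card_fin, hQr, hcI]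
      push_cast
      rfl
    have hstepA : (∑ f : Sym2 (Fin n) → Fin q, (Ecount f : ℝ)) * q = N * Qr := by
      have h0 := sum_Ecount (n := n) (q := q)
      rw [hN, hQr, hcI]
      exact_mod_cast h0
    have hsplit : ∑ f ∈ Finset.univ \ evFinset p3, (Ecount f : ℝ)
        + ∑ f ∈ evFinset p3, (Ecount f : ℝ)
        = ∑ f : Sym2 (Fin n) → Fin q, (Ecount f : ℝ) :=
      Finset.sum_sdiff (Finset.subset_univ _)
    have hstepB : (∑ f ∈ evFinset p3, (Ecount f : ℝ)) * (2*q) ≤ B * (N - 1) := by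
      rw [Finset.sum_mul]
      have := Finset.sum_le_card_nsmul (evFinset p3)
        (fun f => (Ecount f : ℝ) * (2*q)) (N - 1) ?_
      · rw [nsmul_eq_mul] at this
        exact this
      · intro f hf
        rw [mem_evFinset, hp3] at hf
        have h5 : (2*q*Ecount f : ℕ) + 1 ≤ Nd n := hf
        have hcast : (2*(q:ℝ)*(Ecount f : ℝ)) + 1 ≤ N := by
          rw [hN]
          exact_mod_cast h5
        show (Ecount f : ℝ) * (2*q) ≤ N - 1
        linarith
    have hstepC : ∑ f ∈ Finset.univ \ evFinset p3, (Ecount f : ℝ)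
        ≤ (Qr - B) * N := by
      have h1 := Finset.sum_le_card_nsmul (Finset.univ \ evFinset p3)
        (fun f => (Ecount f : ℝ)) N ?_
      · rw [nsmul_eq_mul] at h1
        have hcards : (((Finset.univ : Finset (Sym2 (Fin n) → Fin q)) \ evFinset p3).card : ℝ)
            = Qr - B := by
          rw [Finset.card_sdiff_of_subset (Finset.subset_univ _), Nat.cast_sub
            (Finset.card_le_card (Finset.subset_univ _)), hcardfun, hB]
        rw [hcards] at h1
        exact h1
      · intro f _
        show (Ecount f : ℝ) ≤ N
        rw [hN]
        exact_mod_cast Ecount_le f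
    -- combine
    have hqR : (2:ℝ) ≤ q := by exact_mod_cast hq2
    have hC2 := mul_le_mul_of_nonneg_right hstepC (by positivity : (0:ℝ) ≤ 2*q)
    have hsplit2 : (∑ f ∈ Finset.univ \ evFinset p3, (Ecount f : ℝ)) * (2*q)
        + (∑ f ∈ evFinset p3, (Ecount f : ℝ)) * (2*q)
        = (∑ f : Sym2 (Fin n) → Fin q, (Ecount f : ℝ)) * (2*q) := by
      rw [← add_mul, hsplit]
    have hstepA2 : (∑ f : Sym2 (Fin n) → Fin q, (Ecount f : ℝ)) * (2*q) = 2*(N*Qr) := by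
      calc (∑ f : Sym2 (Fin n) → Fin q, (Ecount f : ℝ)) * (2*q)
          = ((∑ f : Sym2 (Fin n) → Fin q, (Ecount f : ℝ)) * q) * 2 := by ring
        _ = 2*(N*Qr) := by rw [hstepA]; ring
    have hkey : B * ((2*q)*N - N + 1) ≤ (2*q-2) * N * Qr := by
      linarith [hstepB, hC2, hsplit2, hstepA2]
    have hfin : (B * (2*q-1)) * N ≤ ((2*q-2) * Qr) * N := by
      linarith [hkey, hB0, hN1]
    have hfin2 := le_of_mul_le_mul_right hfin (by linarith : (0:ℝ) < N)
    linarith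
  -- union bound
  obtain ⟨f, hf1, hf2, hf3⟩ : ∃ f : Sym2 (Fin n) → Fin q, ¬ p1 f ∧ ¬ p2 f ∧ ¬ p3 f := by
    have hq2R : (2:ℝ) ≤ (q:ℝ) := by exact_mod_cast hq2
    have h2q1 : (0:ℝ) < 2*q - 1 := by linarith
    have hb3' : ((evFinset p3).card : ℝ) ≤ (2*q-2) * Qr / (2*q-1) := by
      rw [le_div_iff₀ h2q1]
      exact hb3
    have hsum : ((evFinset p1).card : ℝ) + (evFinset p2).card + (evFinset p3).card < Qr := by
      have hcoef : Qr/(8*q) + Qr/(8*q) + (2*q-2)*Qr/(2*q-1) < Qr := by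
        rw [← add_div, ← two_mul]
        have e1 : 2 * Qr / (8*q) = Qr/(4*q) := by
          rw [div_eq_div_iff (by positivity) (by positivity)]
          ring
        rw [e1]
        rw [div_add_div _ _ (by positivity : (4:ℝ)*q ≠ 0) (by linarith : (2:ℝ)*q-1 ≠ 0)]
        rw [div_lt_iff₀ (by positivity : (0:ℝ) < 4*q*(2*q-1))]
        nlinarith [hQpos, hq2R]
      linarith [hb1, hb2, hb3']
    have hcardlt : (evFinset p1 ∪ evFinset p2 ∪ evFinset p3).card
        < (Finset.univ : Finset (Sym2 (Fin n) → Fin q)).card := by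
      have hle : ((evFinset p1 ∪ evFinset p2 ∪ evFinset p3).card : ℝ)
          ≤ ((evFinset p1).card : ℝ) + (evFinset p2).card + (evFinset p3).card := by
        have t1 := Finset.card_union_le (evFinset p1 ∪ evFinset p2) (evFinset p3)
        have t2 := Finset.card_union_le (evFinset p1) (evFinset p2)
        push_cast
        exact_mod_cast le_trans t1 (by omega)
      have : ((evFinset p1 ∪ evFinset p2 ∪ evFinset p3).card : ℝ)
          < ((Finset.univ : Finset (Sym2 (Fin n) → Fin q)).card : ℝ) := by
        rw [Finset.card_univ, Fintype.card_fun, Fintype.card_fin]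
        calc ((evFinset p1 ∪ evFinset p2 ∪ evFinset p3).card : ℝ)
            ≤ _ := hle
          _ < Qr := hsum
          _ = ((q ^ cI : ℕ) : ℝ) := by rw [hQr]; push_cast; rfl
      exact_mod_cast this
    have hne : (Finset.univ \ (evFinset p1 ∪ evFinset p2 ∪ evFinset p3)).Nonempty := by
      rw [← Finset.card_pos, Finset.card_sdiff_of_subset (Finset.subset_univ _)]
      omega
    obtain ⟨f, hf⟩ := hne
    rw [Finset.mem_sdiff, Finset.mem_union, Finset.mem_union] at hf
    push_neg at hf
    obtain ⟨-, ⟨hf1, hf2⟩, hf3⟩ := hf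
    exact ⟨f, fun h => hf1 (mem_evFinset.mpr h), fun h => hf2 (mem_evFinset.mpr h),
      fun h => hf3 (mem_evFinset.mpr h)⟩
  refine ⟨Gf f, by rwa [hp1, not_not] at hf1, ?_, ?_⟩
  · -- average degree bound
    rw [hp3, not_lt] at hf3
    have hnpos : (0:ℝ) < n := by positivity
    have havg : avgDeg (Gf f) = 2 * (Ecount f : ℝ) / n := by
      rw [avgDeg, ncard_edgeSet_Gf, Nat.card_eq_fintype_card, Fintype.card_fin]
    rw [havg]
    refine le_trans F5 ?_
    have hNdval : (Nd n : ℝ) = n * ((n:ℝ) - 1) / 2 := by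
      rw [Nd_val, Nat.cast_choose_two]
    have hf3R : (Nd n : ℝ) ≤ 2*q*(Ecount f : ℝ) := by exact_mod_cast hf3
    rw [div_le_div_iff₀ (by positivity) hnpos]
    rw [hNdval] at hf3R
    nlinarith [hf3R, hq0]
  · -- induced C4-free subgraphs
    intro S hC4
    by_cases hSm : m ≤ S.card
    · exfalso
      obtain ⟨S', hS'sub, hS'card⟩ := Finset.exists_subset_card_eq hSm
      rw [hp2] at hf2
      have hq2f : ∃ a ∈ S', ∃ b ∈ S', ∃ c ∈ S', ∃ d ∈ S', a ≠ b ∧ c ≠ d ∧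
          (Gf f).Adj a c ∧ (Gf f).Adj b c ∧ (Gf f).Adj a d ∧ (Gf f).Adj b d := by
        by_contra hno
        exact hf2 ⟨S', hS'card, hno⟩
      obtain ⟨a, ha, b, hb, c, hc, d, hd, hab, hcd, h1, h2, h3, h4⟩ := hq2f
      apply hC4
      refine ⟨⟨a, Finset.mem_coe.mpr (hS'sub ha)⟩, ⟨b, Finset.mem_coe.mpr (hS'sub hb)⟩,
        ⟨c, Finset.mem_coe.mpr (hS'sub hc)⟩, ⟨d, Finset.mem_coe.mpr (hS'sub hd)⟩,
        fun h => hab (congrArg Subtype.val h), fun h => hcd (congrArg Subtype.val h),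
        ?_, ?_, ?_, ?_⟩ <;>
      rw [induce_adj']
      · exact h1
      · exact h2
      · exact h3
      · exact h4
    · have hcardW : Fintype.card ↥(S : Set (Fin n)) ≤ k^2 - k - 1 := by
        have hcoe : Fintype.card ↥(S : Set (Fin n)) = S.card := by simp
        rw [hcoe]
        omega
      exact c4free_avgDeg_lt _ hC4 k hk2 hcardW

end Construction
section Arithmetic

lemma le_rpow_inv_of_pow_le {a x e : ℝ} (ha : 0 ≤ a) (he : 0 < e)
    (h : a ^ e ≤ x) : a ≤ x ^ (1/e) := by
  have h0x : (0:ℝ) ≤ a ^ e := Real.rpow_nonneg ha e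
  have h2 := Real.rpow_le_rpow h0x h (by positivity : (0:ℝ) ≤ 1/e)
  rwa [← Real.rpow_mul ha, mul_one_div, div_self (ne_of_gt he), Real.rpow_one] at h2

end Arithmetic

set_option maxRecDepth 10000 in
set_option maxHeartbeats 4000000 in
/-- Corollary 6.5 (Theorem 1.3(a)): for all sufficiently large `k` there is a `K_{k,k}`-free
graph of average degree at least `k^(k/21)` in which every induced `C₄`-free subgraph has
average degree less than `k`; that is, `f_Ind(k,k) ≥ k^(k/21)`. -/
theorem diagonal_lower_bound :
    ∃ k₀ : ℕ, ∀ k : ℕ, k₀ ≤ k →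
      ∃ (n : ℕ) (G : SimpleGraph (Fin n)),
        KssFree G k ∧ ((k : ℝ) ^ ((k : ℝ) / 21)) ≤ avgDeg G ∧
        ∀ S : Finset (Fin n), C4Free (G.induce (S : Set (Fin n))) →
          avgDeg (G.induce (S : Set (Fin n))) < k := by
  refine ⟨2^100, fun k hk => ?_⟩
  have hk2 : 2 ≤ k := le_trans (by norm_num) hk
  set kR : ℝ := (k:ℝ) with hkR
  have hkR2 : (2:ℝ)^(100:ℕ) ≤ kR := by
    rw [hkR]
    exact_mod_cast hk
  have hkRpos : (0:ℝ) < kR := by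
    have : (0:ℝ) < 2^(100:ℕ) := by positivity
    linarith
  have hkR1 : (1:ℝ) ≤ kR := le_trans (by norm_num) hkR2
  set q := ⌊kR^((1:ℝ)/5)⌋₊ with hqdef
  set n := q^(k/3) with hndef
  set m := k^2 - k with hmdef
  -- basic bounds on q
  have hq_up : (q:ℝ) ≤ kR^((1:ℝ)/5) := Nat.floor_le (by positivity)
  have hA1 : (1:ℝ) ≤ kR^((1:ℝ)/30) := by
    calc (1:ℝ) = 1^((1:ℝ)/30) := (Real.one_rpow _).symm
      _ ≤ kR^((1:ℝ)/30) := Real.rpow_le_rpow (by norm_num) hkR1 (by norm_num)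
  have hA2 : (2:ℝ) ≤ kR^((1:ℝ)/30) := by
    have h30 : ((2:ℝ))^((30:ℝ)) ≤ kR := by
      have : ((2:ℝ))^((30:ℝ)) = 2^(30:ℕ) := by
        rw [← Real.rpow_natCast 2 30]
        norm_num
      rw [this]
      calc ((2:ℝ))^(30:ℕ) ≤ 2^(100:ℕ) := by norm_num
        _ ≤ kR := hkR2
    have h2' := le_rpow_inv_of_pow_le (by norm_num : (0:ℝ) ≤ 2) (by norm_num : (0:ℝ) < 30) h30
    convert h2' using 2
  have hB6 : (8192:ℝ) ≤ kR^((1:ℝ)/6) := by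
    have h6 : ((8192:ℝ))^((6:ℝ)) ≤ kR := by
      have : ((8192:ℝ))^((6:ℝ)) = 8192^(6:ℕ) := by
        rw [← Real.rpow_natCast 8192 6]
        norm_num
      rw [this]
      calc ((8192:ℝ))^(6:ℕ) = 2^(78:ℕ) := by norm_num
        _ ≤ 2^(100:ℕ) := by norm_num
        _ ≤ kR := hkR2
    have h6' := le_rpow_inv_of_pow_le (by norm_num : (0:ℝ) ≤ 8192) (by norm_num : (0:ℝ) < 6) h6
    convert h6' using 2
  have hB1 : (1:ℝ) ≤ kR^((1:ℝ)/6) := by linarith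
  have hsplit15 : kR^((1:ℝ)/5) = kR^((1:ℝ)/6) * kR^((1:ℝ)/30) := by
    rw [← Real.rpow_add hkRpos]
    norm_num
  have hq_low : kR^((1:ℝ)/6) ≤ (q:ℝ) := by
    have hfl : kR^((1:ℝ)/5) < (q:ℝ) + 1 := Nat.lt_floor_add_one _
    have hBpos : (0:ℝ) ≤ kR^((1:ℝ)/6) := by positivity
    have hmul : kR^((1:ℝ)/6) * 2 ≤ kR^((1:ℝ)/6) * kR^((1:ℝ)/30) :=
      mul_le_mul_of_nonneg_left hA2 hBpos
    have : kR^((1:ℝ)/6) + 1 ≤ kR^((1:ℝ)/5) := by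
      rw [hsplit15]
      linarith
    linarith
  have hq2 : 2 ≤ q := by
    have : (2:ℝ) ≤ (q:ℝ) := by
      calc (2:ℝ) ≤ 8192 := by norm_num
        _ ≤ kR^((1:ℝ)/6) := hB6
        _ ≤ (q:ℝ) := hq_low
    exact_mod_cast this
  have hn2 : 2 ≤ n := by
    rw [hndef]
    calc 2 ≤ q := hq2
      _ ≤ q^(k/3) := Nat.le_self_pow (by omega) q
  -- F3
  have hF3 : 8*q*n^(2*k) ≤ q^(k*k) := by
    have hexp : 4 + (k/3)*(2*k) ≤ k*k := by
      have hd3 : (k/3)*3 ≤ k := Nat.div_mul_le_self k 3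
      have hprod : 2*k*((k/3)*3) ≤ 2*k*k := Nat.mul_le_mul_left _ hd3
      nlinarith [hprod, hk2]
    calc 8*q*n^(2*k) = 8*q*q^((k/3)*(2*k)) := by rw [hndef, ← pow_mul]
      _ ≤ q^4 * q^((k/3)*(2*k)) := by
          have h8 : 8*q ≤ q^4 := by
            have : 2^3 ≤ q^3 := Nat.pow_le_pow_left hq2 3
            calc 8*q ≤ q^3*q := Nat.mul_le_mul_right q (by simpa using this)
              _ = q^4 := by ring
          exact Nat.mul_le_mul_right _ h8
      _ = q^(4 + (k/3)*(2*k)) := by rw [pow_add]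
      _ ≤ q^(k*k) := Nat.pow_le_pow_right (by omega) hexp
  -- real notation
  have hqRpos : (0:ℝ) < (q:ℝ) := by
    have : 0 < q := by omega
    exact_mod_cast this
  have hq1R : (1:ℝ) ≤ (q:ℝ) := by
    have : 1 ≤ q := by omega
    exact_mod_cast this
  set L := Real.log kR with hL
  have hL0 : 0 ≤ L := Real.log_nonneg hkR1
  have hlogA : Real.log (kR^((1:ℝ)/30)) = (1/30)*L := Real.log_rpow hkRpos _
  have hL30 : L ≤ 30*(kR^((1:ℝ)/30)) := by
    have h1 := Real.log_le_sub_one_of_pos (show (0:ℝ) < kR^((1:ℝ)/30) by positivity)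
    rw [hlogA] at h1
    nlinarith [hA1]
  have h256L : 256*L ≤ kR^((1:ℝ)/5) := by
    rw [hsplit15]
    have h1 : (7680:ℝ)*(kR^((1:ℝ)/30)) ≤ kR^((1:ℝ)/6) * kR^((1:ℝ)/30) := by
      apply mul_le_mul_of_nonneg_right _ (by positivity)
      linarith [hB6]
    nlinarith [hL30, hA1]
  -- F4
  set T := ((m/2)/2)*((m/2)/2) with hT
  have hkk2 : 2*k ≤ k^2 := by nlinarith [hk2]
  have hm4 : (m/2)/2 = m/4 := by rw [Nat.div_div_eq_div_mul]
  have hT_low : (k^2/8)*(k^2/8) ≤ T := by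
    rw [hT, hm4]
    have h1 : k^2/8 ≤ m/4 := by
      rw [hmdef]
      omega
    exact Nat.mul_le_mul h1 h1
  have hcast8 : (kR^(2:ℕ) - 7)/8 ≤ ((k^2/8 : ℕ):ℝ) := by
    have h1 : k^2 - 7 ≤ (k^2/8)*8 := by omega
    have h2 : ((k^2 - 7 : ℕ):ℝ) ≤ ((k^2/8 : ℕ):ℝ)*8 := by exact_mod_cast h1
    have h3 : (kR^(2:ℕ) - 7) ≤ ((k^2 - 7 : ℕ):ℝ) := by
      have h7 : (7:ℕ) ≤ k^2 := by nlinarith [hk2]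
      rw [Nat.cast_sub h7]
      push_cast
      rw [hkR]
    linarith
  have hkR4 : (4:ℝ) ≤ kR := by
    have h4 : (4:ℝ) ≤ 2^(100:ℕ) := by norm_num
    linarith
  have hT4 : kR^(4:ℕ)/256 ≤ (T:ℝ) := by
    have h1 : ((k^2/8 : ℕ):ℝ) * ((k^2/8 : ℕ):ℝ) ≤ (T:ℝ) := by exact_mod_cast hT_low
    have h2 : kR^(2:ℕ)/16 ≤ ((k^2/8 : ℕ):ℝ) := by
      have h14 : (14:ℝ) ≤ kR^(2:ℕ) := by nlinarith [hkR4]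
      have := hcast8
      nlinarith [this]
    have h2pos : (0:ℝ) ≤ kR^(2:ℕ)/16 := by positivity
    calc kR^(4:ℕ)/256 = (kR^(2:ℕ)/16) * (kR^(2:ℕ)/16) := by ring
      _ ≤ ((k^2/8 : ℕ):ℝ) * ((k^2/8 : ℕ):ℝ) := by
          exact mul_le_mul h2 h2 h2pos (le_trans h2pos h2)
      _ ≤ (T:ℝ) := h1
  have hq4R : ((q:ℝ))^(4:ℕ) ≤ kR^((4:ℝ)/5) := by
    have h1 : ((q:ℝ))^(4:ℕ) ≤ (kR^((1:ℝ)/5))^(4:ℕ) :=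
      pow_le_pow_left₀ (by positivity) hq_up 4
    have h2 : (kR^((1:ℝ)/5))^(4:ℕ) = kR^((4:ℝ)/5) := by
      rw [← Real.rpow_natCast (kR^((1:ℝ)/5)) 4, ← Real.rpow_mul hkRpos.le]
      norm_num
    rw [h2] at h1
    exact h1
  have hCkR : kR^((1:ℝ)/5) ≤ kR := by
    calc kR^((1:ℝ)/5) ≤ kR^((1:ℝ)) := Real.rpow_le_rpow_of_exponent_le hkR1 (by norm_num)
      _ = kR := Real.rpow_one kR
  have hqkR : (q:ℝ) ≤ kR := le_trans hq_up hCkR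
  have hlogq : Real.log q ≤ (1/5)*L := by
    calc Real.log q ≤ Real.log (kR^((1:ℝ)/5)) := Real.log_le_log hqRpos hq_up
      _ = (1/5)*L := Real.log_rpow hkRpos _
  have hlogq0 : 0 ≤ Real.log q := Real.log_nonneg hq1R
  have hnR : (n:ℝ) = ((q:ℝ))^(k/3 : ℕ) := by
    rw [hndef]
    push_cast
    rfl
  have hlogn : Real.log (n:ℝ) = ((k/3 : ℕ):ℝ) * Real.log q := by
    rw [hnR, Real.log_pow]
  have hlogn0 : 0 ≤ Real.log (n:ℝ) := by
    rw [hlogn]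
    positivity
  have hdiv3 : ((k/3 : ℕ):ℝ) ≤ kR := by
    rw [hkR]
    exact_mod_cast Nat.div_le_self k 3
  have hmR : (m:ℝ) ≤ kR^(2:ℕ) := by
    have h1 : m ≤ k^2 := by rw [hmdef]; omega
    have h2 : ((m:ℕ):ℝ) ≤ ((k^2:ℕ):ℝ) := by exact_mod_cast h1
    calc (m:ℝ) ≤ ((k^2:ℕ):ℝ) := h2
      _ = kR^(2:ℕ) := by push_cast [hkR]; ring
  have hkR3 : (8:ℝ) ≤ kR^(3:ℕ) := by nlinarith [hkR4]
  have hnpos : (0:ℝ) < (n:ℝ) := by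
    have : 0 < n := by omega
    exact_mod_cast this
  have hlog_main : Real.log (8*(q:ℝ)*((n:ℝ))^m) ≤ (T:ℝ)/(((q:ℝ))^(4:ℕ)) := by
    have hsplitlog : Real.log (8*(q:ℝ)*((n:ℝ))^m)
        = Real.log (8*(q:ℝ)) + (m:ℝ) * Real.log (n:ℝ) := by
      rw [Real.log_mul (by positivity) (by positivity), Real.log_pow]
    have hlog8q : Real.log (8*(q:ℝ)) ≤ 2*L := by
      have h1 : 8*(q:ℝ) ≤ kR^(2:ℕ) := by nlinarith [hqkR, hkR4]
      calc Real.log (8*(q:ℝ)) ≤ Real.log (kR^(2:ℕ)) := Real.log_le_log (by positivity) h1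
        _ = 2*L := by rw [Real.log_pow]; push_cast; ring
    have hlognbound : Real.log (n:ℝ) ≤ kR * ((1/5)*L) := by
      rw [hlogn]
      exact mul_le_mul hdiv3 hlogq hlogq0 (by positivity)
    have hmlog : (m:ℝ) * Real.log (n:ℝ) ≤ kR^(2:ℕ) * (kR * ((1/5)*L)) := by
      exact mul_le_mul hmR hlognbound hlogn0 (by positivity)
    have hLHS : Real.log (8*(q:ℝ)*((n:ℝ))^m) ≤ kR^(3:ℕ) * L := by
      rw [hsplitlog]
      have e1 : kR^(2:ℕ) * (kR * ((1/5)*L)) = kR^(3:ℕ) * L / 5 := by ring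
      rw [e1] at hmlog
      nlinarith [hlog8q, hmlog, mul_le_mul_of_nonneg_right hkR3 hL0]
    have hRHS : kR^(3:ℕ) * L ≤ (T:ℝ)/(((q:ℝ))^(4:ℕ)) := by
      have hTpos : (0:ℝ) ≤ (T:ℝ) :=
        le_trans (by positivity : (0:ℝ) ≤ kR^(4:ℕ)/256) hT4
      have h1 : (T:ℝ)/(kR^((4:ℝ)/5)) ≤ (T:ℝ)/(((q:ℝ))^(4:ℕ)) :=
        div_le_div_of_nonneg_left hTpos (by positivity) hq4R
      have h2 : (kR^(4:ℕ)/256)/(kR^((4:ℝ)/5)) ≤ (T:ℝ)/(kR^((4:ℝ)/5)) :=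
        (div_le_div_iff_of_pos_right (by positivity)).mpr hT4
      have h3 : (kR^(4:ℕ)/256)/(kR^((4:ℝ)/5)) = kR^((16:ℝ)/5)/256 := by
        have e1 : kR^(4:ℕ) = kR^((4:ℝ)) := (Real.rpow_natCast kR 4).symm
        have e2 : kR^((16:ℝ)/5) = kR^((4:ℝ))/kR^((4:ℝ)/5) := by
          rw [← Real.rpow_sub hkRpos]
          norm_num
        rw [e1, e2]
        ring
      have h4 : kR^(3:ℕ) * L ≤ kR^((16:ℝ)/5)/256 := by
        have e3 : kR^((16:ℝ)/5) = kR^(3:ℕ) * kR^((1:ℝ)/5) := by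
          rw [← Real.rpow_natCast kR 3, ← Real.rpow_add hkRpos]
          norm_num
        have h5 : kR^(3:ℕ) * (256*L) ≤ kR^(3:ℕ) * kR^((1:ℝ)/5) :=
          mul_le_mul_of_nonneg_left h256L (by positivity)
        rw [e3]
        linarith
      linarith [h1, h2, h4, h3.symm.le, h3.le]
    linarith [hLHS, hRHS]
  have hF4 : 8*(q:ℝ)*(n:ℝ)^m * (1 - 1/(q:ℝ)^4)^(((m/2)/2)*((m/2)/2)) ≤ 1 := by
    set x : ℝ := 1 - 1/(q:ℝ)^4 with hx
    have hq4pos : (0:ℝ) < (q:ℝ)^4 := by positivity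
    have hx0 : 0 ≤ x := by
      rw [hx]
      have h1 : 1/(q:ℝ)^4 ≤ 1 := by
        rw [div_le_one hq4pos]
        have h14 : (1:ℝ)^4 ≤ (q:ℝ)^4 := pow_le_pow_left₀ (by norm_num) hq1R 4
        linarith [h14]
      linarith
    have hxexp : x ≤ Real.exp (-(1/(q:ℝ)^4)) := by
      have := Real.add_one_le_exp (-(1/(q:ℝ)^4))
      rw [hx]
      linarith
    have hxT : x^T ≤ Real.exp (-((T:ℝ)/(q:ℝ)^4)) := by
      calc x^T ≤ (Real.exp (-(1/(q:ℝ)^4)))^T := pow_le_pow_left₀ hx0 hxexp T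
        _ = Real.exp ((T:ℝ) * (-(1/(q:ℝ)^4))) := (Real.exp_nat_mul _ T).symm
        _ = Real.exp (-((T:ℝ)/(q:ℝ)^4)) := by
            congr 1
            ring
    have hmain : 8*(q:ℝ)*((n:ℝ))^m ≤ Real.exp ((T:ℝ)/(q:ℝ)^4) := by
      rw [← Real.log_le_iff_le_exp (by positivity)]
      have e4 : ((q:ℝ))^(4:ℕ) = (q:ℝ)^4 := by norm_num
      rw [← e4]
      exact hlog_main
    calc 8*(q:ℝ)*(n:ℝ)^m * x^T
        ≤ Real.exp ((T:ℝ)/(q:ℝ)^4) * Real.exp (-((T:ℝ)/(q:ℝ)^4)) := by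
          exact mul_le_mul hmain hxT (by positivity) (by positivity)
      _ = Real.exp ((T:ℝ)/(q:ℝ)^4 + (-((T:ℝ)/(q:ℝ)^4))) := (Real.exp_add _ _).symm
      _ = 1 := by rw [add_neg_cancel, Real.exp_zero]
  -- F5
  have hF5 : (k:ℝ)^((k:ℝ)/21) ≤ ((n:ℝ)-1)/(2*(q:ℝ)) := by
    set e : ℕ := k/3 with he
    have hnlow : kR^(((e:ℕ):ℝ)/6) ≤ (n:ℝ) := by
      have h1 : (kR^((1:ℝ)/6))^(e:ℕ) ≤ ((q:ℝ))^(e:ℕ) :=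
        pow_le_pow_left₀ (by positivity) hq_low e
      have h2 : (kR^((1:ℝ)/6))^(e:ℕ) = kR^(((e:ℕ):ℝ)/6) := by
        rw [← Real.rpow_natCast (kR^((1:ℝ)/6)) e, ← Real.rpow_mul hkRpos.le]
        congr 1
        ring
      rw [hnR, ← h2]
      exact h1
    have hexp5 : 1 + kR/21 ≤ ((e:ℕ):ℝ)/6 := by
      have h1 : k ≤ 3*e + 2 := by
        rw [he]
        omega
      have h2 : kR ≤ 3*((e:ℕ):ℝ) + 2 := by
        rw [hkR]
        exact_mod_cast h1
      have h140 : (140:ℝ) ≤ kR := by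
        have : (140:ℝ) ≤ 2^(100:ℕ) := by norm_num
        linarith
      linarith
    have hnbig : kR * kR^(kR/21) ≤ (n:ℝ) := by
      have h1 : kR^((1:ℝ) + kR/21) ≤ kR^(((e:ℕ):ℝ)/6) :=
        Real.rpow_le_rpow_of_exponent_le hkR1 hexp5
      have h2 : kR^((1:ℝ) + kR/21) = kR * kR^(kR/21) := by
        rw [Real.rpow_add hkRpos, Real.rpow_one]
      rw [← h2]
      exact le_trans h1 hnlow
    have h4q : 4*(q:ℝ) ≤ kR := by
      have h1 : (4:ℝ) ≤ kR^((4:ℝ)/5) := by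
        calc (4:ℝ) ≤ 8192 := by norm_num
          _ ≤ kR^((1:ℝ)/6) := hB6
          _ ≤ kR^((4:ℝ)/5) := Real.rpow_le_rpow_of_exponent_le hkR1 (by norm_num)
      have h2 : (q:ℝ) * 4 ≤ kR^((1:ℝ)/5) * kR^((4:ℝ)/5) := by
        apply mul_le_mul hq_up h1 (by norm_num) (by positivity)
      have h3 : kR^((1:ℝ)/5) * kR^((4:ℝ)/5) = kR := by
        rw [← Real.rpow_add hkRpos]
        norm_num
      linarith [h2, h3.le, h3.ge]
    have hPpos : (0:ℝ) ≤ kR^(kR/21) := by positivity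
    have hn4 : 4*(q:ℝ) * kR^(kR/21) ≤ (n:ℝ) := by
      calc 4*(q:ℝ) * kR^(kR/21) ≤ kR * kR^(kR/21) :=
            mul_le_mul_of_nonneg_right h4q hPpos
        _ ≤ (n:ℝ) := hnbig
    have hn2R : (2:ℝ) ≤ (n:ℝ) := by exact_mod_cast hn2
    rw [le_div_iff₀ (by positivity : (0:ℝ) < 2*(q:ℝ))]
    have hgoal : kR^(kR/21) * (2*(q:ℝ)) ≤ (n:ℝ) - 1 := by
      nlinarith [hn4, hn2R, hPpos, hqRpos]
    calc (k:ℝ)^((k:ℝ)/21) * (2*(q:ℝ)) = kR^(kR/21) * (2*(q:ℝ)) := by rw [hkR]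
      _ ≤ (n:ℝ) - 1 := hgoal
  -- conclude
  obtain ⟨G, hG1, hG2, hG3⟩ := construction k q n m hq2 hn2 hk2 hmdef hF3 hF4 hF5
  exact ⟨n, G, hG1, hG2, hG3⟩
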